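/- Let G be a finite group with subgroups H ⊴ A ⊴ G (H normal in A and A normal in G), and let s be an integer with 0 ≤ s ≤ |A:H|. Then A is a (0,s)-regular set of the pair (G,H) if and only if both of the following hold: (1) |H|/|H ∩ H^t| divides s for every t ∈ G∖A; (2) for every x ∈ G∖A such that x² ∈ A and s·|H ∩ H^x|/|H| is odd, there exists a ∈ A such that HxaH = H(xa)⁻¹H. -/

import Mathlib

open scoped Pointwise

/-- A subset `C` of the vertices of a graph `Γ` is an `(r,s)`-regular set if every vertex
in `C` has exactly `r` neighbours in `C` and every vertex outside `C` has exactly `s`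
neighbours in `C`. -/
def IsRegularVertexSet {V : Type*} (Γ : SimpleGraph V) (C : Set V) (r s : ℕ) : Prop :=
  (∀ v ∈ C, {w | w ∈ C ∧ Γ.Adj v w}.ncard = r) ∧
  ∀ v ∉ C, {w | w ∈ C ∧ Γ.Adj v w}.ncard = s

/-- The coset graph `Cos(G,H,U)` on the left cosets of `H` in `G`:
`g₁H` and `g₂H` are adjacent iff `g₁⁻¹ g₂ ∈ U`. -/
def cosetGraph {G : Type*} [Group G] (H : Subgroup G) (U : Set G) : SimpleGraph (G ⧸ H) :=
  SimpleGraph.fromRel fun C D =>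
    ∃ g₁ g₂ : G, QuotientGroup.mk g₁ = C ∧ QuotientGroup.mk g₂ = D ∧ g₁⁻¹ * g₂ ∈ U

/-- `U` is a valid connection set for a coset graph `Cos(G,H,U)`:
inverse-closed, disjoint from `H`, and a union of double cosets of `H` (`HUH = U`). -/
def IsCosetGraphConnectionSet {G : Type*} [Group G] (H : Subgroup G) (U : Set G) : Prop :=
  U⁻¹ = U ∧ (H : Set G) ∩ U = ∅ ∧ (H : Set G) * U * (H : Set G) = U

/-- `A` is an `(r,s)`-regular set of the pair `(G,H)`: there is a coset graph
`Cos(G,H,U)` in which the set of left cosets of `H` in `A` is an `(r,s)`-regular set. -/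
def IsRegularSetOfPair {G : Type*} [Group G] (H A : Subgroup G) (r s : ℕ) : Prop :=
  ∃ U : Set G, IsCosetGraphConnectionSet H U ∧
    IsRegularVertexSet (cosetGraph H U)
      {C : G ⧸ H | ∃ a ∈ A, QuotientGroup.mk a = C} r s

/-- `A` is a perfect code of the pair `(G,H)` iff it is a `(0,1)`-regular set of `(G,H)`. -/
def IsPerfectCodeOfPair {G : Type*} [Group G] (H A : Subgroup G) : Prop :=
  IsRegularSetOfPair H A 0 1

/-- A subgroup `A` is an `(r,s)`-regular set of `G` iff it is an `(r,s)`-regular set of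
the pair `(G,1)`, i.e. an `(r,s)`-regular set in some Cayley graph of `G`. -/
def IsRegularSetOfGroup {G : Type*} [Group G] (A : Subgroup G) (r s : ℕ) : Prop :=
  IsRegularSetOfPair ⊥ A r s

/-- A subgroup `A` is a perfect code of `G` iff it is a `(0,1)`-regular set of `G`. -/
def IsPerfectCodeOfGroup {G : Type*} [Group G] (A : Subgroup G) : Prop :=
  IsRegularSetOfGroup A 0 1

/-- The conjugate subgroup `K^t = t⁻¹ K t`. -/
def conjSub {G : Type*} [Group G] (K : Subgroup G) (t : G) : Subgroup G :=
  K.map (MulAut.conj t⁻¹).toMonoidHom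



section AuxCombinatorics

lemma aux_fiber_count {G : Type*} [Group G] [Fintype G] (K : Subgroup G) (S : Set G)
    (hS : ∀ g ∈ S, g • (K : Set G) ⊆ S) :
    S.ncard = (QuotientGroup.mk '' S : Set (G ⧸ K)).ncard * Nat.card K := by
  classical
  have : Fintype (G ⧸ K) := Fintype.ofFinite _
  rw [Set.ncard_eq_toFinset_card' S, Set.ncard_eq_toFinset_card']
  rw [Finset.card_eq_sum_card_fiberwise (f := (QuotientGroup.mk : G → G ⧸ K))
      (t := (QuotientGroup.mk '' S : Set (G ⧸ K)).toFinset)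
      (fun g hg => by simp only [Finset.mem_coe, Set.mem_toFinset] at hg ⊢; exact Set.mem_image_of_mem _ hg)]
  rw [Finset.sum_congr rfl (fun q hq => ?_), Finset.sum_const, smul_eq_mul]
  simp only [Set.mem_toFinset] at hq
  obtain ⟨g, hgS, rfl⟩ := hq
  have hset : S.toFinset.filter (fun b => (QuotientGroup.mk b : G ⧸ K) = QuotientGroup.mk g)
      = (g • (K : Set G)).toFinset := by
    ext b
    simp only [Finset.mem_filter, Set.mem_toFinset]
    constructor
    · rintro ⟨hbS, hb⟩
      rw [Set.mem_smul_set_iff_inv_smul_mem]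
      exact (QuotientGroup.eq.mp hb.symm : g⁻¹ * b ∈ K)
    · intro hb
      refine ⟨hS g hgS hb, ?_⟩
      rw [Set.mem_smul_set_iff_inv_smul_mem] at hb
      exact (QuotientGroup.eq.mpr hb).symm
  rw [hset, ← Set.ncard_eq_toFinset_card', Set.ncard_smul_set]
  rw [← Nat.card_coe_set_eq]
  rfl

lemma aux_even_card_of_involution {α : Type*} (T : Finset α) (φ : α → α)
    (hmem : ∀ a ∈ T, φ a ∈ T) (hinv : ∀ a ∈ T, φ (φ a) = a) (hfix : ∀ a ∈ T, φ a ≠ a) :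
    Even T.card := by
  have h0 : ((T.card : ZMod 2)) = 0 := by
    have : ∑ _x ∈ T, (1 : ZMod 2) = 0 := by
      refine Finset.sum_involution (fun a _ => φ a) (fun a ha => ?_) (fun a ha _ => hfix a ha)
        (fun a ha => hmem a ha) (fun a ha => hinv a ha)
      decide
    simpa using this
  have := (ZMod.natCast_eq_zero_iff T.card 2).mp h0
  exact (even_iff_two_dvd).mpr this

lemma aux_exists_involution_closed_subset {α : Type*} [DecidableEq α] (φ : α → α) :
    ∀ (m : ℕ) (T : Finset α), (∀ a ∈ T, φ a ∈ T) → (∀ a ∈ T, φ (φ a) = a) →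
    m ≤ T.card → (Odd m → ∃ a ∈ T, φ a = a) →
    ∃ S ⊆ T, S.card = m ∧ ∀ a ∈ S, φ a ∈ S := by
  intro m
  induction m using Nat.strong_induction_on with
  | _ m ih =>
  intro T hmem hinv hle hodd
  match m with
  | 0 => exact ⟨∅, by simp⟩
  | 1 =>
    obtain ⟨a, haT, hfa⟩ := hodd (by decide)
    exact ⟨{a}, by simpa using haT, by simp, by simp [hfa]⟩
  | (k+2) =>
    by_cases hall : ∀ a ∈ T, φ a = a
    · obtain ⟨S, hST, hcard⟩ := Finset.exists_subset_card_eq hle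
      exact ⟨S, hST, hcard, fun a haS => by rw [hall a (hST haS)]; exact haS⟩
    · push_neg at hall
      obtain ⟨a, haT, hfa⟩ := hall
      set T' := (T.erase a).erase (φ a) with hT'
      have hsub : T' ⊆ T := (Finset.erase_subset _ _).trans (Finset.erase_subset _ _)
      have hmemT' : ∀ b ∈ T', b ∈ T ∧ b ≠ a ∧ b ≠ φ a := by
        intro b hb
        simp only [hT', Finset.mem_erase] at hb
        exact ⟨hb.2.2, hb.2.1, hb.1⟩
      have hmem' : ∀ b ∈ T', φ b ∈ T' := by
        intro b hb
        obtain ⟨hbT, hba, hbfa⟩ := hmemT' b hb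
        simp only [hT', Finset.mem_erase]
        refine ⟨?_, ?_, hmem b hbT⟩
        · intro h; exact hba (by rw [← hinv b hbT, h, hinv a haT])
        · intro h; exact hbfa (by rw [← hinv b hbT, h])
      have hcardT' : T'.card = T.card - 2 := by
        have h1 : φ a ∈ T.erase a := Finset.mem_erase.mpr ⟨hfa, hmem a haT⟩
        rw [hT', Finset.card_erase_of_mem h1, Finset.card_erase_of_mem haT]
        omega
      have hle' : k ≤ T'.card := by omega
      have hodd' : Odd k → ∃ b ∈ T', φ b = b := by
        intro hk
        obtain ⟨b, hbT, hfb⟩ := hodd (by rcases hk with ⟨j, hj⟩; exact ⟨j+1, by omega⟩)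
        refine ⟨b, ?_, hfb⟩
        simp only [hT', Finset.mem_erase]
        refine ⟨?_, ?_, hbT⟩
        · intro h; rw [h, hinv a haT] at hfb; exact hfa hfb.symm
        · intro h; rw [h] at hfb; exact hfa hfb
      obtain ⟨S, hST', hScard, hSclosed⟩ :=
        ih k (by omega) T' hmem' (fun b hb => hinv b (hsub hb)) hle' hodd'
      refine ⟨insert a (insert (φ a) S), ?_, ?_, ?_⟩
      · intro b hb
        simp only [Finset.mem_insert] at hb
        rcases hb with rfl | rfl | hb
        · exact haT
        · exact hmem a haT
        · exact hsub (hST' hb)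
      · have haS : a ∉ insert (φ a) S := by
          simp only [Finset.mem_insert]
          push_neg
          refine ⟨fun h => hfa h.symm, fun h => (hmemT' a (hST' h)).2.1 rfl⟩
        have hfaS : φ a ∉ S := fun h => (hmemT' _ (hST' h)).2.2 rfl
        rw [Finset.card_insert_of_notMem haS, Finset.card_insert_of_notMem hfaS, hScard]
      · intro b hb
        simp only [Finset.mem_insert] at hb ⊢
        rcases hb with rfl | rfl | hb
        · right; left; rfl
        · left; exact hinv a haT
        · right; right; exact hSclosed b hb

end AuxCombinatorics

section AuxGroup
variable {G : Type*} [Group G] {H A : Subgroup G}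

lemma aux_memSup_left {K : Subgroup G} {h : G} (hh : h ∈ H) : h ∈ H ⊔ K :=
  (le_sup_left : H ≤ H ⊔ K) hh

lemma aux_memSup_right {K : Subgroup G} {k : G} (hk : k ∈ K) : k ∈ H ⊔ K :=
  (le_sup_right : K ≤ H ⊔ K) hk

lemma aux_mem_conjSub {t g : G} : g ∈ conjSub H t ↔ t * g * t⁻¹ ∈ H := by
  simp only [conjSub, Subgroup.mem_map, MulEquiv.coe_toMonoidHom, MulAut.conj_apply, inv_inv]
  constructor
  · rintro ⟨h, hh, rfl⟩
    have : t * (t⁻¹ * h * t) * t⁻¹ = h := by group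
    rwa [this]
  · intro hg
    exact ⟨t * g * t⁻¹, hg, by group⟩

lemma aux_card_conjSub [Fintype G] (H : Subgroup G) (t : G) :
    Nat.card (conjSub H t) = Nat.card H :=
  (Nat.card_congr (((MulAut.conj t⁻¹).subgroupMap H).toEquiv)).symm

lemma aux_conjA (hHA : H ≤ A) (hHnA : (H.subgroupOf A).Normal) :
    ∀ a ∈ A, ∀ h ∈ H, a * h * a⁻¹ ∈ H := by
  intro a ha h hh
  have := hHnA.conj_mem ⟨h, hHA hh⟩ (by simpa [Subgroup.mem_subgroupOf] using hh) ⟨a, ha⟩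
  simpa [Subgroup.mem_subgroupOf] using this

lemma aux_conjSub_le (hHA : H ≤ A) (hAnG : A.Normal) (x : G) : conjSub H x ≤ A := by
  intro g hg
  rw [aux_mem_conjSub] at hg
  have := hAnG.conj_mem _ (hHA hg) x⁻¹
  simpa [mul_assoc] using this

lemma aux_conj_mem_conjSub (hHA : H ≤ A) (hHnA : (H.subgroupOf A).Normal) (hAnG : A.Normal)
    {x a g : G} (ha : a ∈ A) (hg : g ∈ conjSub H x) : a * g * a⁻¹ ∈ conjSub H x := by
  rw [aux_mem_conjSub] at hg ⊢
  have hxa : x * a * x⁻¹ ∈ A := hAnG.conj_mem a ha x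
  have := aux_conjA hHA hHnA _ hxa _ hg
  have heq : x * a * x⁻¹ * (x * g * x⁻¹) * (x * a * x⁻¹)⁻¹ = x * (a * g * a⁻¹) * x⁻¹ := by group
  rwa [heq] at this

lemma aux_conjSub_mul_right (hHA : H ≤ A) (hHnA : (H.subgroupOf A).Normal) (hAnG : A.Normal)
    {x b : G} (hb : b ∈ A) : conjSub H (x * b) = conjSub H x := by
  ext g
  rw [aux_mem_conjSub, aux_mem_conjSub]
  constructor
  · intro hg
    have heq : x * b * g * (x * b)⁻¹ = x * (b * g * b⁻¹) * x⁻¹ := by group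
    rw [heq] at hg
    have h1 : b * g * b⁻¹ ∈ conjSub H x := aux_mem_conjSub.mpr hg
    have h2 := aux_conj_mem_conjSub hHA hHnA hAnG (A.inv_mem hb) h1
    have heq2 : b⁻¹ * (b * g * b⁻¹) * b⁻¹⁻¹ = g := by group
    rw [heq2] at h2
    exact aux_mem_conjSub.mp h2
  · intro hg
    have h1 : b * g * b⁻¹ ∈ conjSub H x :=
      aux_conj_mem_conjSub hHA hHnA hAnG hb (aux_mem_conjSub.mpr hg)
    rw [aux_mem_conjSub] at h1
    have heq : x * (b * g * b⁻¹) * x⁻¹ = x * b * g * (x * b)⁻¹ := by group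
    rwa [heq] at h1

lemma aux_coeL (hHA : H ≤ A) (hHnA : (H.subgroupOf A).Normal) (hAnG : A.Normal) (x : G) :
    ((H ⊔ conjSub H x : Subgroup G) : Set G) = (conjSub H x : Set G) * (H : Set G) := by
  set K := conjSub H x with hK
  let P : Subgroup G :=
  { carrier := (K : Set G) * (H : Set G)
    one_mem' := ⟨1, K.one_mem, 1, H.one_mem, by simp⟩
    mul_mem' := by
      rintro p q ⟨k1, hk1, h1, hh1, rfl⟩ ⟨k2, hk2, h2, hh2, rfl⟩
      exact ⟨k1 * (h1 * k2 * h1⁻¹),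
        K.mul_mem hk1 (aux_conj_mem_conjSub hHA hHnA hAnG (hHA hh1) hk2),
        h1 * h2, H.mul_mem hh1 hh2, by group⟩
    inv_mem' := by
      rintro p ⟨k, hk, h, hh, rfl⟩
      refine ⟨h⁻¹ * k⁻¹ * h, ?_, h⁻¹, H.inv_mem hh, by group⟩
      have := aux_conj_mem_conjSub hHA hHnA hAnG (A.inv_mem (hHA hh)) (K.inv_mem hk)
      simpa [inv_inv] using this }
  apply le_antisymm
  · have hle : H ⊔ K ≤ P := by
      apply sup_le
      · intro h hh; exact ⟨1, K.one_mem, h, hh, one_mul h⟩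
      · intro k hk; exact ⟨k, hk, 1, H.one_mem, mul_one k⟩
    exact fun g hg => hle hg
  · rintro g ⟨k, hk, h, hh, rfl⟩
    exact Subgroup.mul_mem _ (aux_memSup_right hk) (aux_memSup_left hh)

lemma aux_mem_smulA_iff {x g : G} : g ∈ x • (A : Set G) ↔ x⁻¹ * g ∈ A := by
  rw [Set.mem_smul_set_iff_inv_smul_mem, smul_eq_mul, SetLike.mem_coe]

lemma aux_inv_mem_smulA (hAnG : A.Normal) {x g : G} (hx2 : x ^ 2 ∈ A)
    (hg : g ∈ x • (A : Set G)) : g⁻¹ ∈ x • (A : Set G) := by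
  rw [aux_mem_smulA_iff] at hg ⊢
  have heq : x⁻¹ * g⁻¹ = (x ^ 2)⁻¹ * (x * (x⁻¹ * g)⁻¹ * x⁻¹) := by group
  rw [heq]
  exact A.mul_mem (A.inv_mem hx2) (hAnG.conj_mem _ (A.inv_mem hg) x)

variable (hHA : H ≤ A) (hHnA : (H.subgroupOf A).Normal) (hAnG : A.Normal)
include hHA hHnA hAnG

lemma aux_L_eq_of_mem_coset {x g : G} (hg : g ∈ x • (A : Set G)) :
    H ⊔ conjSub H g = H ⊔ conjSub H x := by
  rw [aux_mem_smulA_iff] at hg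
  have h1 : g = x * (x⁻¹ * g) := by group
  rw [h1, aux_conjSub_mul_right hHA hHnA hAnG hg]

lemma aux_mem_HgH_iff {x b g : G} (hb : b ∈ A) :
    g ∈ (H : Set G) * {x * b} * (H : Set G) ↔
      (x * b)⁻¹ * g ∈ (H ⊔ conjSub H x : Subgroup G) := by
  have hLeq : (H ⊔ conjSub H (x * b) : Subgroup G) = H ⊔ conjSub H x := by
    rw [aux_conjSub_mul_right hHA hHnA hAnG hb]
  constructor
  · rintro ⟨p, ⟨h, hh, c, hc, rfl⟩, h', hh', rfl⟩
    rw [Set.mem_singleton_iff] at hc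
    subst hc
    have h1 : (x * b)⁻¹ * h * (x * b) ∈ conjSub H (x * b) := by
      rw [aux_mem_conjSub]
      have heq : x * b * ((x * b)⁻¹ * h * (x * b)) * (x * b)⁻¹ = h := by group
      rwa [heq]
    rw [aux_conjSub_mul_right hHA hHnA hAnG hb] at h1
    have heq : (x * b)⁻¹ * (h * (x * b) * h') = ((x * b)⁻¹ * h * (x * b)) * h' := by group
    rw [heq]
    exact Subgroup.mul_mem _ (aux_memSup_right h1) (aux_memSup_left hh')
  · intro hg
    rw [← hLeq, ← SetLike.mem_coe, aux_coeL hHA hHnA hAnG] at hg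
    obtain ⟨k, hk, h', hh', hkh⟩ := hg
    rw [SetLike.mem_coe, aux_mem_conjSub] at hk
    refine ⟨(x * b * k * (x * b)⁻¹) * (x * b),
      ⟨x * b * k * (x * b)⁻¹, hk, x * b, rfl, rfl⟩, h', hh', ?_⟩
    have hg2 : g = (x * b) * (k * h') := by
      rw [show k * h' = (x*b)⁻¹ * g from hkh]; group
    rw [hg2]; group

lemma aux_doubleCoset_eq {x b : G} (hb : b ∈ A) :
    (H : Set G) * {x * b} * (H : Set G)
      = (x * b) • ((H ⊔ conjSub H x : Subgroup G) : Set G) := by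
  ext g
  rw [Set.mem_smul_set_iff_inv_smul_mem, smul_eq_mul, aux_mem_HgH_iff hHA hHnA hAnG hb,
    SetLike.mem_coe]

lemma aux_conj_mem_L_inv {x c : G} (hc : c ∈ (H ⊔ conjSub H x : Subgroup G)) :
    x * c * x⁻¹ ∈ (H ⊔ conjSub H x⁻¹ : Subgroup G) := by
  rw [← SetLike.mem_coe, aux_coeL hHA hHnA hAnG] at hc
  obtain ⟨k, hk, h, hh, rfl⟩ := hc
  rw [SetLike.mem_coe, aux_mem_conjSub] at hk
  have h2 : x * h * x⁻¹ ∈ conjSub H x⁻¹ := by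
    rw [aux_mem_conjSub]
    have heq : x⁻¹ * (x * h * x⁻¹) * x⁻¹⁻¹ = h := by group
    rwa [heq]
  have heq : x * (k * h) * x⁻¹ = (x * k * x⁻¹) * (x * h * x⁻¹) := by group
  rw [heq]
  exact Subgroup.mul_mem _ (aux_memSup_left hk) (aux_memSup_right h2)

lemma aux_conj_mem_L_of_sq {x g c : G} (hx2 : x ^ 2 ∈ A) (hg : g ∈ x • (A : Set G))
    (hc : c ∈ (H ⊔ conjSub H x : Subgroup G)) :
    g * c * g⁻¹ ∈ (H ⊔ conjSub H x : Subgroup G) := by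
  have h1 : c ∈ (H ⊔ conjSub H g : Subgroup G) := by
    rw [aux_L_eq_of_mem_coset hHA hHnA hAnG hg]; exact hc
  have h2 := aux_conj_mem_L_inv hHA hHnA hAnG h1
  have hginv : g⁻¹ ∈ x • (A : Set G) := aux_inv_mem_smulA hAnG hx2 hg
  rwa [aux_L_eq_of_mem_coset hHA hHnA hAnG hginv] at h2

lemma aux_card_L_mul_card_inf [Fintype G] (x : G) :
    Nat.card (H ⊔ conjSub H x : Subgroup G) * Nat.card (H ⊓ conjSub H x : Subgroup G)
      = Nat.card H * Nat.card H := by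
  classical
  set K := conjSub H x with hK
  set M := H ⊓ K with hM
  set L := H ⊔ K with hL
  have h1 : (L : Set G).ncard = (QuotientGroup.mk '' (L : Set G) : Set (G ⧸ H)).ncard
      * Nat.card H := by
    refine aux_fiber_count H (L : Set G) ?_
    rintro g hg _ ⟨h, hh, rfl⟩
    show g * h ∈ (L : Set G)
    exact L.mul_mem hg (aux_memSup_left hh)
  have h2 : (QuotientGroup.mk '' (L : Set G) : Set (G ⧸ H))
      = QuotientGroup.mk '' (K : Set G) := by
    apply Set.Subset.antisymm
    · rintro _ ⟨g, hg, rfl⟩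
      have hg' : g ∈ (K : Set G) * (H : Set G) := by
        rw [← aux_coeL hHA hHnA hAnG x]; exact hg
      obtain ⟨k, hk, h, hh, rfl⟩ := hg'
      exact ⟨k, hk, QuotientGroup.eq.mpr (show k⁻¹ * (k * h) ∈ H by simpa using hh)⟩
    · exact Set.image_mono (fun g hg => aux_memSup_right hg)
  have h3 : (K : Set G).ncard = (QuotientGroup.mk '' (K : Set G) : Set (G ⧸ M)).ncard
      * Nat.card M := by
    refine aux_fiber_count M (K : Set G) ?_
    rintro g hg _ ⟨m, hm, rfl⟩
    show g * m ∈ (K : Set G)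
    exact K.mul_mem hg (inf_le_right (a := H) (b := K) hm)
  have h4 : (QuotientGroup.mk '' (K : Set G) : Set (G ⧸ M)).ncard
      = (QuotientGroup.mk '' (K : Set G) : Set (G ⧸ H)).ncard := by
    have hMH : M ≤ H := inf_le_left
    set f : G ⧸ M → G ⧸ H := fun q => QuotientGroup.mk q.out with hf
    have hfmk : ∀ g : G, f (QuotientGroup.mk g) = QuotientGroup.mk g := by
      intro g
      have hmem : g⁻¹ * (QuotientGroup.mk g : G ⧸ M).out ∈ M := by
        rw [← QuotientGroup.eq]
        exact (QuotientGroup.out_eq' _).symm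
      exact (QuotientGroup.eq.mpr (hMH hmem)).symm
    have himg : f '' (QuotientGroup.mk '' (K : Set G) : Set (G ⧸ M))
        = (QuotientGroup.mk '' (K : Set G) : Set (G ⧸ H)) := by
      rw [← Set.image_comp]
      exact Set.image_congr (fun g _ => hfmk g)
    have hinj : Set.InjOn f (QuotientGroup.mk '' (K : Set G)) := by
      rintro _ ⟨k, hk, rfl⟩ _ ⟨k', hk', rfl⟩ hkk'
      rw [hfmk, hfmk] at hkk'
      have hH : k⁻¹ * k' ∈ H := QuotientGroup.eq.mp hkk'
      have hKmem : k⁻¹ * k' ∈ K := K.mul_mem (K.inv_mem hk) hk'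
      exact QuotientGroup.eq.mpr ⟨hH, hKmem⟩
    rw [← himg, Set.ncard_image_of_injOn hinj]
  have hcardL : Nat.card L = (L : Set G).ncard := by
    rw [← Nat.card_coe_set_eq]; rfl
  have hcardK : Nat.card K = (K : Set G).ncard := by
    rw [← Nat.card_coe_set_eq]; rfl
  have hKH : Nat.card K = Nat.card H := aux_card_conjSub H x
  calc Nat.card L * Nat.card M
      = ((QuotientGroup.mk '' (K : Set G) : Set (G ⧸ H)).ncard * Nat.card H) * Nat.card M := by
        rw [hcardL, h1, h2]
    _ = Nat.card H * ((QuotientGroup.mk '' (K : Set G) : Set (G ⧸ M)).ncard * Nat.card M) := by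
        rw [h4]; ring
    _ = Nat.card H * Nat.card K := by rw [← h3, hcardK]
    _ = Nat.card H * Nat.card H := by rw [hKH]

lemma aux_out_mem_of_closed {x : G} {S₀ : Set G}
    (hclosed : ∀ g ∈ S₀, g • ((H ⊔ conjSub H x : Subgroup G) : Set G) ⊆ S₀)
    {p : G ⧸ (H ⊔ conjSub H x : Subgroup G)} (hp : p ∈ QuotientGroup.mk '' S₀) :
    p.out ∈ S₀ := by
  obtain ⟨g, hg, rfl⟩ := hp
  have hmem : g⁻¹ * (QuotientGroup.mk g : G ⧸ (H ⊔ conjSub H x : Subgroup G)).out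
      ∈ (H ⊔ conjSub H x : Subgroup G) := by
    rw [← QuotientGroup.eq]
    exact (QuotientGroup.out_eq' _).symm
  have := hclosed g hg ⟨_, hmem, rfl⟩
  simpa using this

lemma aux_phi_mem {x : G} {S₀ : Set G}
    (hclosed : ∀ g ∈ S₀, g • ((H ⊔ conjSub H x : Subgroup G) : Set G) ⊆ S₀)
    (hinvS : ∀ g ∈ S₀, g⁻¹ ∈ S₀)
    {p : G ⧸ (H ⊔ conjSub H x : Subgroup G)} (hp : p ∈ QuotientGroup.mk '' S₀) :
    (QuotientGroup.mk p.out⁻¹ : G ⧸ (H ⊔ conjSub H x : Subgroup G))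
      ∈ QuotientGroup.mk '' S₀ :=
  ⟨p.out⁻¹, hinvS _ (aux_out_mem_of_closed hHA hHnA hAnG hclosed hp), rfl⟩

lemma aux_phi_invol {x : G} (hx2 : x ^ 2 ∈ A) {S₀ : Set G} (hsub : S₀ ⊆ x • (A : Set G))
    (hclosed : ∀ g ∈ S₀, g • ((H ⊔ conjSub H x : Subgroup G) : Set G) ⊆ S₀)
    (hinvS : ∀ g ∈ S₀, g⁻¹ ∈ S₀)
    {p : G ⧸ (H ⊔ conjSub H x : Subgroup G)} (hp : p ∈ QuotientGroup.mk '' S₀) :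
    (QuotientGroup.mk
        (QuotientGroup.mk (p.out⁻¹) : G ⧸ (H ⊔ conjSub H x : Subgroup G)).out⁻¹
      : G ⧸ (H ⊔ conjSub H x : Subgroup G)) = p := by
  have hgS : p.out ∈ S₀ := aux_out_mem_of_closed hHA hHnA hAnG hclosed hp
  have h1 : p.out * (QuotientGroup.mk (p.out⁻¹) : G ⧸ (H ⊔ conjSub H x : Subgroup G)).out
      ∈ (H ⊔ conjSub H x : Subgroup G) := by
    have h := QuotientGroup.eq.mp
      (QuotientGroup.out_eq' (QuotientGroup.mk (p.out⁻¹)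
        : G ⧸ (H ⊔ conjSub H x : Subgroup G))).symm
    simpa using h
  have hginv : p.out⁻¹ ∈ x • (A : Set G) := aux_inv_mem_smulA hAnG hx2 (hsub hgS)
  have h2 := aux_conj_mem_L_of_sq hHA hHnA hAnG hx2 hginv h1
  have heq : p.out⁻¹ * (p.out * (QuotientGroup.mk (p.out⁻¹)
      : G ⧸ (H ⊔ conjSub H x : Subgroup G)).out) * p.out⁻¹⁻¹
      = (QuotientGroup.mk (p.out⁻¹) : G ⧸ (H ⊔ conjSub H x : Subgroup G)).out * p.out := by
    group
  rw [heq] at h2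
  calc (QuotientGroup.mk ((QuotientGroup.mk (p.out⁻¹)
          : G ⧸ (H ⊔ conjSub H x : Subgroup G)).out⁻¹)
        : G ⧸ (H ⊔ conjSub H x : Subgroup G))
      = QuotientGroup.mk p.out := QuotientGroup.eq.mpr (by simpa using h2)
    _ = p := QuotientGroup.out_eq' p

end AuxGroup

section AuxGraph
variable {G : Type*} [Group G] {H A : Subgroup G} {U : Set G}

lemma aux_mem_C_iff (hHA : H ≤ A) {g : G} :
    (QuotientGroup.mk g ∈ {C : G ⧸ H | ∃ a ∈ A, QuotientGroup.mk a = C}) ↔ g ∈ A := by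
  constructor
  · rintro ⟨a, ha, hag⟩
    have h1 : a⁻¹ * g ∈ H := QuotientGroup.eq.mp hag
    have h2 : a * (a⁻¹ * g) ∈ A := A.mul_mem ha (hHA h1)
    simpa using h2
  · intro hg
    exact ⟨g, hg, rfl⟩

lemma aux_hUH_right (hU : IsCosetGraphConnectionSet H U) {u h : G} (hu : u ∈ U) (hh : h ∈ H) :
    u * h ∈ U := by
  rw [← hU.2.2]
  exact ⟨1 * u, ⟨1, H.one_mem, u, hu, rfl⟩, h, hh, by simp⟩

lemma aux_hUH_left (hU : IsCosetGraphConnectionSet H U) {u h : G} (hu : u ∈ U) (hh : h ∈ H) :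
    h * u ∈ U := by
  rw [← hU.2.2]
  exact ⟨h * u, ⟨h, hh, u, hu, rfl⟩, 1, H.one_mem, by simp⟩

lemma aux_adj_iff (hU : IsCosetGraphConnectionSet H U) {g b : G} :
    (cosetGraph H U).Adj (QuotientGroup.mk g) (QuotientGroup.mk b) ↔ g⁻¹ * b ∈ U := by
  rw [cosetGraph, SimpleGraph.fromRel_adj]
  constructor
  · rintro ⟨hne, hrel | hrel⟩
    · obtain ⟨g₁, g₂, h1, h2, hu⟩ := hrel
      have hh1 : g₁⁻¹ * g ∈ H := QuotientGroup.eq.mp h1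
      have hh2 : g₂⁻¹ * b ∈ H := QuotientGroup.eq.mp h2
      have heq : (g₁⁻¹ * g)⁻¹ * (g₁⁻¹ * g₂) * (g₂⁻¹ * b) = g⁻¹ * b := by group
      rw [← heq]
      exact aux_hUH_right hU (aux_hUH_left hU hu (H.inv_mem hh1)) hh2
    · obtain ⟨g₁, g₂, h1, h2, hu⟩ := hrel
      have hh1 : g₁⁻¹ * b ∈ H := QuotientGroup.eq.mp h1
      have hh2 : g₂⁻¹ * g ∈ H := QuotientGroup.eq.mp h2
      have hbgU : b⁻¹ * g ∈ U := by
        have heq : (g₁⁻¹ * b)⁻¹ * (g₁⁻¹ * g₂) * (g₂⁻¹ * g) = b⁻¹ * g := by group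
        rw [← heq]
        exact aux_hUH_right hU (aux_hUH_left hU hu (H.inv_mem hh1)) hh2
      rw [← hU.1, Set.mem_inv]
      simpa using hbgU
  · intro hu
    refine ⟨?_, Or.inl ⟨g, b, rfl, rfl, hu⟩⟩
    intro h
    have hmem : g⁻¹ * b ∈ H := QuotientGroup.eq.mp h
    exact Set.eq_empty_iff_forall_notMem.mp hU.2.1 (g⁻¹ * b) ⟨hmem, hu⟩

variable [Fintype G]

lemma aux_count_nbrs (hHA : H ≤ A) (hU : IsCosetGraphConnectionSet H U) (g : G) :
    ((A : Set G) ∩ g • U).ncard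
      = {w | w ∈ {C : G ⧸ H | ∃ a ∈ A, QuotientGroup.mk a = C}
          ∧ (cosetGraph H U).Adj (QuotientGroup.mk g) w}.ncard * Nat.card H := by
  have himg : (QuotientGroup.mk '' ((A : Set G) ∩ g • U) : Set (G ⧸ H))
      = {w | w ∈ {C : G ⧸ H | ∃ a ∈ A, QuotientGroup.mk a = C}
          ∧ (cosetGraph H U).Adj (QuotientGroup.mk g) w} := by
    apply Set.Subset.antisymm
    · rintro _ ⟨b, ⟨hbA, hbU⟩, rfl⟩
      refine ⟨⟨b, hbA, rfl⟩, ?_⟩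
      rw [aux_adj_iff hU]
      rwa [Set.mem_smul_set_iff_inv_smul_mem, smul_eq_mul] at hbU
    · rintro w ⟨⟨a, ha, rfl⟩, hadj⟩
      rw [aux_adj_iff hU] at hadj
      refine ⟨a, ⟨ha, ?_⟩, rfl⟩
      rw [Set.mem_smul_set_iff_inv_smul_mem, smul_eq_mul]
      exact hadj
  rw [← himg]
  apply aux_fiber_count
  rintro b ⟨hbA, hbU⟩ _ ⟨h, hh, rfl⟩
  refine ⟨A.mul_mem hbA (hHA hh), ?_⟩
  rw [Set.mem_smul_set_iff_inv_smul_mem, smul_eq_mul] at hbU ⊢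
  have heq : g⁻¹ * (b • h) = (g⁻¹ * b) * h := by simp [smul_eq_mul]; group
  rw [heq]
  exact aux_hUH_right hU hbU hh

lemma aux_regular_iff (hHA : H ≤ A) {s : ℕ} (hU : IsCosetGraphConnectionSet H U) :
    IsRegularVertexSet (cosetGraph H U)
      {C : G ⧸ H | ∃ a ∈ A, QuotientGroup.mk a = C} 0 s
    ↔ (U ∩ (A : Set G) = ∅ ∧
        ∀ x : G, x ∉ A → (U ∩ x • (A : Set G)).ncard = s * Nat.card H) := by
  have hHpos : 0 < Nat.card H := Nat.card_pos
  constructor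
  · rintro ⟨h0, hs⟩
    constructor
    · rw [Set.eq_empty_iff_forall_notMem]
      rintro u ⟨huU, huA⟩
      have h1 : (QuotientGroup.mk (1 : G)) ∈ {C : G ⧸ H | ∃ a ∈ A, QuotientGroup.mk a = C} :=
        ⟨1, A.one_mem, rfl⟩
      have h2 := h0 _ h1
      rw [Set.ncard_eq_zero (Set.toFinite _)] at h2
      have h3 : (QuotientGroup.mk u : G ⧸ H) ∈
          {w | w ∈ {C : G ⧸ H | ∃ a ∈ A, QuotientGroup.mk a = C}
            ∧ (cosetGraph H U).Adj (QuotientGroup.mk (1:G)) w} := by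
        refine ⟨⟨u, huA, rfl⟩, ?_⟩
        rw [aux_adj_iff hU]
        simpa using huU
      rw [h2] at h3
      exact h3
    · intro x hx
      have hginA : x⁻¹ ∉ A := fun h => hx (by simpa using A.inv_mem h)
      have hvC : (QuotientGroup.mk x⁻¹ : G ⧸ H) ∉
          {C : G ⧸ H | ∃ a ∈ A, QuotientGroup.mk a = C} := by
        rw [aux_mem_C_iff hHA]; exact hginA
      have hcount := hs _ hvC
      have hkey := aux_count_nbrs hHA hU x⁻¹
      rw [hcount] at hkey
      have htrans : ((A : Set G) ∩ x⁻¹ • U).ncard = (U ∩ x • (A : Set G)).ncard := by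
        have heq : x⁻¹ • (U ∩ x • (A : Set G)) = (A : Set G) ∩ x⁻¹ • U := by
          rw [Set.smul_set_inter]
          rw [Set.inter_comm]
          congr 1
          rw [smul_smul]
          simp
        rw [← heq, Set.ncard_smul_set]
      rw [htrans] at hkey
      exact hkey
  · rintro ⟨hUA, hcnt⟩
    constructor
    · rintro v ⟨a, ha, rfl⟩
      have hempty : {w | w ∈ {C : G ⧸ H | ∃ a ∈ A, QuotientGroup.mk a = C}
          ∧ (cosetGraph H U).Adj (QuotientGroup.mk a) w} = ∅ := by
        rw [Set.eq_empty_iff_forall_notMem]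
        rintro w ⟨⟨b, hb, rfl⟩, hadj⟩
        rw [aux_adj_iff hU] at hadj
        have hab : a⁻¹ * b ∈ A := A.mul_mem (A.inv_mem ha) hb
        exact Set.eq_empty_iff_forall_notMem.mp hUA (a⁻¹ * b) ⟨hadj, hab⟩
      rw [hempty]
      simp
    · intro v hv
      obtain ⟨g, rfl⟩ := QuotientGroup.mk_surjective v
      have hgA : g ∉ A := fun h => hv ((aux_mem_C_iff hHA).mpr h)
      have hkey := aux_count_nbrs hHA hU g
      have hxA : g⁻¹ ∉ A := fun h => hgA (by simpa using A.inv_mem h)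
      have hcount := hcnt g⁻¹ hxA
      have htrans : ((A : Set G) ∩ g • U).ncard = (U ∩ g⁻¹ • (A : Set G)).ncard := by
        have heq : g • (U ∩ g⁻¹ • (A : Set G)) = (A : Set G) ∩ g • U := by
          rw [Set.smul_set_inter, Set.inter_comm]
          congr 1
          rw [smul_smul]
          simp
        rw [← heq, Set.ncard_smul_set]
      rw [htrans, hcount] at hkey
      exact Nat.eq_of_mul_eq_mul_right hHpos hkey.symm

end AuxGraph

/-- **Lemma (key2).** Let `H ⊴ A ⊴ G` and `0 ≤ s ≤ |A:H|`. Then `A` is a `(0,s)`-regular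
set of `(G,H)` iff (1) `|H|/|H ∩ H^t|` divides `s` for every `t ∈ G∖A`, and (2) for every
`x ∈ G∖A` with `x² ∈ A` and `s·|H ∩ H^x|/|H|` odd, there exists `a ∈ A` with
`HxaH = H(xa)⁻¹H`. -/
theorem lemma_key2 {G : Type*} [Group G] [Fintype G] (H A : Subgroup G) (hHA : H ≤ A)
    (hHnA : (H.subgroupOf A).Normal) (hAnG : A.Normal) (s : ℕ) (hs : s ≤ H.relIndex A) :
    IsRegularSetOfPair H A 0 s ↔
      (∀ t : G, t ∉ A → (Nat.card ↥H / Nat.card ↥(H ⊓ conjSub H t)) ∣ s) ∧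
      (∀ x : G, x ∉ A → x ^ 2 ∈ A →
        Odd (s * Nat.card ↥(H ⊓ conjSub H x) / Nat.card ↥H) →
        ∃ a ∈ A, (H : Set G) * {x * a} * (H : Set G)
          = (H : Set G) * {(x * a)⁻¹} * (H : Set G)) := by
  classical
  haveI := hAnG
  have hHpos : 0 < Nat.card H := Nat.card_pos
  constructor
  · rintro ⟨U, hU, hreg⟩
    rw [aux_regular_iff hHA hU] at hreg
    obtain ⟨hUA, hcnt⟩ := hreg
    have hUclosed : ∀ x : G, ∀ g ∈ U ∩ x • (A : Set G),
        g • ((H ⊔ conjSub H x : Subgroup G) : Set G) ⊆ U ∩ x • (A : Set G) := by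
      intro x g hg
      obtain ⟨hgU, hgxA⟩ := hg
      have hb : x⁻¹ * g ∈ A := aux_mem_smulA_iff.mp hgxA
      have hdc : (H : Set G) * {x * (x⁻¹ * g)} * (H : Set G)
          = (x * (x⁻¹ * g)) • ((H ⊔ conjSub H x : Subgroup G) : Set G) :=
        aux_doubleCoset_eq hHA hHnA hAnG hb
      rw [mul_inv_cancel_left] at hdc
      rw [← hdc]
      rintro _ ⟨p, ⟨h, hh, c, hc, rfl⟩, h', hh', rfl⟩
      rw [Set.mem_singleton_iff] at hc
      rw [hc]
      constructor
      · rw [← hU.2.2]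
        exact ⟨h * g, ⟨h, hh, g, hgU, rfl⟩, h', hh', rfl⟩
      · rw [aux_mem_smulA_iff]
        have h1 : x⁻¹ * (h * g * h') = (x⁻¹ * h * x) * (x⁻¹ * g) * h' := by group
        rw [h1]
        have h2 : x⁻¹ * h * x ∈ A := by
          have := hAnG.conj_mem h (hHA hh) x⁻¹
          simpa [mul_assoc] using this
        exact A.mul_mem (A.mul_mem h2 hb) (hHA hh')
    have hkey : ∀ x : G, x ∉ A → ∃ n : ℕ,
        s = n * (Nat.card H / Nat.card ↥(H ⊓ conjSub H x)) ∧
        (QuotientGroup.mk '' (U ∩ x • (A : Set G))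
          : Set (G ⧸ (H ⊔ conjSub H x : Subgroup G))).ncard = n := by
      intro x hx
      have hcpos : 0 < Nat.card ↥(H ⊓ conjSub H x) := Nat.card_pos
      have hcdvd : Nat.card ↥(H ⊓ conjSub H x) ∣ Nat.card H :=
        Subgroup.card_dvd_of_le inf_le_left
      have hdc : (Nat.card H / Nat.card ↥(H ⊓ conjSub H x)) * Nat.card ↥(H ⊓ conjSub H x)
          = Nat.card H := Nat.div_mul_cancel hcdvd
      have hLc := aux_card_L_mul_card_inf hHA hHnA hAnG x
      have hfib := aux_fiber_count (H ⊔ conjSub H x) (U ∩ x • (A : Set G)) (hUclosed x)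
      rw [hcnt x hx] at hfib
      refine ⟨_, ?_, rfl⟩
      -- hfib : s * |H| = n * |L|
      set n := (QuotientGroup.mk '' (U ∩ x • (A : Set G))
          : Set (G ⧸ (H ⊔ conjSub H x : Subgroup G))).ncard
      set cc := Nat.card ↥(H ⊓ conjSub H x)
      set dd := Nat.card H / cc
      have h1 : s * Nat.card H * cc = n * (Nat.card H * Nat.card H) := by
        rw [hfib, mul_assoc, hLc]
      have h2 : s * cc = n * Nat.card H := by
        apply Nat.eq_of_mul_eq_mul_right hHpos
        calc s * cc * Nat.card H = s * Nat.card H * cc := by ring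
          _ = n * (Nat.card H * Nat.card H) := h1
          _ = n * Nat.card H * Nat.card H := by ring
      have h3 : s * cc = n * dd * cc := by
        rw [h2, ← hdc]; ring
      have h4 : s = n * dd := Nat.eq_of_mul_eq_mul_right hcpos h3
      exact h4
    constructor
    · intro t ht
      obtain ⟨n, hn, -⟩ := hkey t ht
      exact ⟨n, by rw [hn]; ring⟩
    · intro x hx hx2 hodd
      by_contra hno
      push_neg at hno
      obtain ⟨n, hn, hncard⟩ := hkey x hx
      have hcpos : 0 < Nat.card ↥(H ⊓ conjSub H x) := Nat.card_pos
      have hcdvd : Nat.card ↥(H ⊓ conjSub H x) ∣ Nat.card H :=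
        Subgroup.card_dvd_of_le inf_le_left
      have hdc : (Nat.card H / Nat.card ↥(H ⊓ conjSub H x)) * Nat.card ↥(H ⊓ conjSub H x)
          = Nat.card H := Nat.div_mul_cancel hcdvd
      have hoddn : Odd n := by
        have h6 : s * Nat.card ↥(H ⊓ conjSub H x) = n * Nat.card H := by
          rw [hn, mul_assoc, hdc]
        have heq : s * Nat.card ↥(H ⊓ conjSub H x) / Nat.card H = n := by
          rw [h6]
          exact Nat.mul_div_cancel n hHpos
        rwa [heq] at hodd
      -- now show n is even, contradiction
      have hSsub : U ∩ x • (A : Set G) ⊆ x • (A : Set G) := Set.inter_subset_right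
      have hSinv : ∀ g ∈ U ∩ x • (A : Set G), g⁻¹ ∈ U ∩ x • (A : Set G) := by
        rintro g ⟨hgU, hgA⟩
        refine ⟨?_, aux_inv_mem_smulA hAnG hx2 hgA⟩
        rw [← hU.1]
        simpa using hgU
      set L := (H ⊔ conjSub H x : Subgroup G) with hLdef
      set Q := (QuotientGroup.mk '' (U ∩ x • (A : Set G)) : Set (G ⧸ L)) with hQdef
      have hQfin : Q.Finite := Set.toFinite _
      have heven : Even n := by
        rw [← hncard, Set.ncard_eq_toFinset_card _ hQfin]
        apply aux_even_card_of_involution _ (fun p => QuotientGroup.mk p.out⁻¹)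
        · intro p hp
          rw [Set.Finite.mem_toFinset] at hp ⊢
          exact aux_phi_mem hHA hHnA hAnG (hUclosed x) hSinv hp
        · intro p hp
          rw [Set.Finite.mem_toFinset] at hp
          exact aux_phi_invol hHA hHnA hAnG hx2 hSsub (hUclosed x) hSinv hp
        · intro p hp hfix
          rw [Set.Finite.mem_toFinset] at hp
          have hgS : p.out ∈ U ∩ x • (A : Set G) :=
            aux_out_mem_of_closed hHA hHnA hAnG (hUclosed x) hp
          have hb : x⁻¹ * p.out ∈ A := aux_mem_smulA_iff.mp hgS.2
          have hb' : x⁻¹ * p.out⁻¹ ∈ A :=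
            aux_mem_smulA_iff.mp (aux_inv_mem_smulA hAnG hx2 hgS.2)
          -- hfix : mk p.out⁻¹ = p = mk p.out
          have h5 : p.out * p.out ∈ L := by
            have := QuotientGroup.eq.mp (hfix.trans (QuotientGroup.out_eq' p).symm)
            simpa using this
          refine hno (x⁻¹ * p.out) hb ?_
          rw [aux_doubleCoset_eq hHA hHnA hAnG hb, mul_inv_cancel_left]
          rw [show (p.out)⁻¹ = x * (x⁻¹ * p.out⁻¹) by group]
          rw [aux_doubleCoset_eq hHA hHnA hAnG hb', mul_inv_cancel_left]
          rw [leftCoset_eq_iff]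
          have := L.inv_mem h5
          simpa using this
      rw [← Nat.not_odd_iff_even] at heven
      exact heven hoddn
  · rintro ⟨hdvd, hsym⟩
    have hAcard : H.relIndex A * Nat.card H = Nat.card A := by
      have h1 : (H.subgroupOf A).index * Nat.card (H.subgroupOf A) = Nat.card A :=
        Subgroup.index_mul_card _
      rwa [Nat.card_congr (Subgroup.subgroupOfEquivOfLe hHA).toEquiv] at h1
    obtain ⟨e, he⟩ := exists_injective_nat (G ⧸ A)
    have hVex : ∀ q : G ⧸ A, q ≠ 1 → ∃ V : Set G,
        V ⊆ q.out • (A : Set G) ∧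
        (∀ g ∈ V, g • ((H ⊔ conjSub H q.out : Subgroup G) : Set G) ⊆ V) ∧
        V.ncard = s * Nat.card H ∧
        (q * q = 1 → V⁻¹ = V) := by
      intro q hq
      have hmkx : (QuotientGroup.mk q.out : G ⧸ A) = q := QuotientGroup.out_eq' q
      have hx : q.out ∉ A := by
        intro h
        exact hq (by rw [← hmkx, QuotientGroup.eq_one_iff]; exact h)
      set x := q.out with hxdef
      set L := (H ⊔ conjSub H x : Subgroup G) with hLdef
      have hLA : L ≤ A := sup_le hHA (aux_conjSub_le hHA hAnG x)
      have hLpos : 0 < Nat.card L := Nat.card_pos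
      have hcpos : 0 < Nat.card ↥(H ⊓ conjSub H x) := Nat.card_pos
      have hcdvd : Nat.card ↥(H ⊓ conjSub H x) ∣ Nat.card H :=
        Subgroup.card_dvd_of_le inf_le_left
      have hdc : (Nat.card H / Nat.card ↥(H ⊓ conjSub H x)) * Nat.card ↥(H ⊓ conjSub H x)
          = Nat.card H := Nat.div_mul_cancel hcdvd
      have hLc := aux_card_L_mul_card_inf hHA hHnA hAnG x
      set cc := Nat.card ↥(H ⊓ conjSub H x) with hccdef
      set dd := Nat.card H / cc with hdddef
      have hddpos : 0 < dd := by
        rcases Nat.eq_zero_or_pos dd with h | h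
        · rw [h, zero_mul] at hdc; omega
        · exact h
      set m := s / dd with hmdef
      have hds : dd ∣ s := hdvd x hx
      have hms : dd * m = s := Nat.mul_div_cancel' hds
      have hmL : m * Nat.card L = s * Nat.card H := by
        have h1 : m * Nat.card L * cc = s * Nat.card H * cc := by
          calc m * Nat.card L * cc = m * (Nat.card L * cc) := by ring
            _ = m * (Nat.card H * Nat.card H) := by rw [hLc]
            _ = (dd * m) * cc * Nat.card H := by rw [← hdc]; ring
            _ = s * cc * Nat.card H := by rw [hms]
            _ = s * Nat.card H * cc := by ring
        exact Nat.eq_of_mul_eq_mul_right hcpos h1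
      have hxAclosed : ∀ g ∈ x • (A : Set G), g • (L : Set G) ⊆ x • (A : Set G) := by
        rintro g hg _ ⟨l, hl, rfl⟩
        show g * l ∈ x • (A : Set G)
        rw [aux_mem_smulA_iff] at hg ⊢
        rw [← mul_assoc]
        exact A.mul_mem hg (hLA hl)
      set Q := (QuotientGroup.mk '' (x • (A : Set G)) : Set (G ⧸ L)) with hQdef
      have hQfin : Q.Finite := Set.toFinite _
      have hfib : (x • (A : Set G)).ncard = Q.ncard * Nat.card L :=
        aux_fiber_count L _ hxAclosed
      have hxAcard : (x • (A : Set G)).ncard = Nat.card A := by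
        rw [Set.ncard_smul_set, ← Nat.card_coe_set_eq]; rfl
      have hmle : m ≤ hQfin.toFinset.card := by
        rw [← Set.ncard_eq_toFinset_card _ hQfin]
        have h1 : m * Nat.card L ≤ Q.ncard * Nat.card L := by
          rw [hmL, ← hfib, hxAcard, ← hAcard]
          exact Nat.mul_le_mul_right _ hs
        exact Nat.le_of_mul_le_mul_right h1 hLpos
      have hx2of : q * q = 1 → x ^ 2 ∈ A := by
        intro hq2
        have h1 : (QuotientGroup.mk (x ^ 2) : G ⧸ A) = 1 := by
          rw [pow_two, QuotientGroup.mk_mul, hmkx]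
          exact hq2
        exact (QuotientGroup.eq_one_iff _).mp h1
      have hSF : ∃ SF : Finset (G ⧸ L), (SF : Set (G ⧸ L)) ⊆ Q ∧ SF.card = m ∧
          (q * q = 1 → ∀ p ∈ SF, (QuotientGroup.mk p.out⁻¹ : G ⧸ L) ∈ SF) := by
        by_cases hq2 : q * q = 1
        · have hx2 : x ^ 2 ∈ A := hx2of hq2
          have hinvS : ∀ g ∈ x • (A : Set G), g⁻¹ ∈ x • (A : Set G) :=
            fun g hg => aux_inv_mem_smulA hAnG hx2 hg
          have hfixex : Odd m → ∃ p ∈ hQfin.toFinset,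
              (QuotientGroup.mk p.out⁻¹ : G ⧸ L) = p := by
            intro hmodd
            have h6 : s * cc = m * Nat.card H := by
              calc s * cc = (dd * m) * cc := by rw [hms]
                _ = m * (dd * cc) := by ring
                _ = m * Nat.card H := by rw [hdc]
            have hsc : s * cc / Nat.card H = m := by
              rw [h6]
              exact Nat.mul_div_cancel m hHpos
            obtain ⟨a, ha, heq⟩ := hsym x hx hx2 (by rw [hsc]; exact hmodd)
            have hxaA : x * a ∈ x • (A : Set G) := ⟨a, ha, rfl⟩
            refine ⟨QuotientGroup.mk (x * a), ?_, ?_⟩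
            · rw [Set.Finite.mem_toFinset]
              exact ⟨x * a, hxaA, rfl⟩
            · have hb' : x⁻¹ * (x * a)⁻¹ ∈ A := by
                have h01 : x⁻¹ * (x * a)⁻¹ = (x ^ 2)⁻¹ * (x * a⁻¹ * x⁻¹) := by group
                rw [h01]
                exact A.mul_mem (A.inv_mem hx2) (hAnG.conj_mem _ (A.inv_mem ha) x)
              have hcos : (x * a) • (L : Set G) = (x * a)⁻¹ • (L : Set G) := by
                rw [← aux_doubleCoset_eq hHA hHnA hAnG ha]
                rw [show (x * a)⁻¹ • (L : Set G)
                    = (x * (x⁻¹ * (x * a)⁻¹)) • (L : Set G) by rw [mul_inv_cancel_left]]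
                rw [← aux_doubleCoset_eq hHA hHnA hAnG hb']
                rw [show x * (x⁻¹ * (x * a)⁻¹) = (x * a)⁻¹ by group]
                exact heq
              have hl : (x * a)⁻¹ * (QuotientGroup.mk (x * a) : G ⧸ L).out ∈ L :=
                QuotientGroup.eq.mp (QuotientGroup.out_eq' _).symm
              have hout1 : (QuotientGroup.mk (x * a) : G ⧸ L).out
                  ∈ (x * a) • (L : Set G) := ⟨_, hl, by show x * a * ((x * a)⁻¹ * _) = _; group⟩
              rw [hcos] at hout1
              have hout2 : (x * a) * (QuotientGroup.mk (x * a) : G ⧸ L).out ∈ L := by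
                have h02 := Set.mem_smul_set_iff_inv_smul_mem.mp hout1
                simpa using h02
              have hinv' : (x * a)⁻¹ ∈ x • (A : Set G) := aux_inv_mem_smulA hAnG hx2 hxaA
              have hout3 := aux_conj_mem_L_of_sq hHA hHnA hAnG hx2 hinv' hout2
              have heq2 : (x * a)⁻¹ * ((x * a) * (QuotientGroup.mk (x * a) : G ⧸ L).out)
                  * (x * a)⁻¹⁻¹ = (QuotientGroup.mk (x * a) : G ⧸ L).out * (x * a) := by
                group
              rw [heq2] at hout3
              exact QuotientGroup.eq.mpr (by simpa using hout3)
          obtain ⟨SF, hsub, hcard, hclosed⟩ := aux_exists_involution_closed_subset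
            (fun p : G ⧸ L => QuotientGroup.mk p.out⁻¹) m hQfin.toFinset
            (fun p hp => by
              rw [Set.Finite.mem_toFinset] at hp ⊢
              exact aux_phi_mem hHA hHnA hAnG hxAclosed hinvS hp)
            (fun p hp => by
              rw [Set.Finite.mem_toFinset] at hp
              exact aux_phi_invol hHA hHnA hAnG hx2 Set.Subset.rfl hxAclosed hinvS hp)
            hmle hfixex
          refine ⟨SF, ?_, hcard, fun _ p hp => hclosed p hp⟩
          intro p hp
          exact (Set.Finite.mem_toFinset hQfin).mp (hsub hp)
        · obtain ⟨SF, hsub, hcard⟩ := Finset.exists_subset_card_eq hmle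
          refine ⟨SF, ?_, hcard, fun h => absurd h hq2⟩
          intro p hp
          exact (Set.Finite.mem_toFinset hQfin).mp (hsub hp)
      obtain ⟨SF, hSFQ, hSFcard, hSFclosed⟩ := hSF
      set Vq := (QuotientGroup.mk ⁻¹' (SF : Set (G ⧸ L)) : Set G) with hVqdef
      have hVsub : Vq ⊆ x • (A : Set G) := by
        intro g hg
        have h1 : (QuotientGroup.mk g : G ⧸ L) ∈ Q := hSFQ hg
        obtain ⟨g₀, hg₀, hmk⟩ := h1
        have hlm : g₀⁻¹ * g ∈ L := QuotientGroup.eq.mp hmk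
        have := hxAclosed g₀ hg₀ ⟨g₀⁻¹ * g, hlm, rfl⟩
        simpa using this
      have hVclosed : ∀ g ∈ Vq, g • (L : Set G) ⊆ Vq := by
        rintro g hg _ ⟨l, hl, rfl⟩
        show (QuotientGroup.mk (g * l) : G ⧸ L) ∈ (SF : Set (G ⧸ L))
        have h1 : (QuotientGroup.mk (g * l) : G ⧸ L) = QuotientGroup.mk g :=
          (QuotientGroup.eq.mpr (by simpa using hl)).symm
        rw [h1]
        exact hg
      have hVcard : Vq.ncard = s * Nat.card H := by
        have himg : (QuotientGroup.mk '' Vq : Set (G ⧸ L)) = (SF : Set (G ⧸ L)) := by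
          apply Set.Subset.antisymm
          · rintro _ ⟨g, hg, rfl⟩
            exact hg
          · intro p hp
            refine ⟨p.out, ?_, QuotientGroup.out_eq' p⟩
            show (QuotientGroup.mk p.out : G ⧸ L) ∈ (SF : Set (G ⧸ L))
            rw [QuotientGroup.out_eq']
            exact hp
        have h2 := aux_fiber_count L Vq hVclosed
        rw [himg, Set.ncard_coe_finset, hSFcard, hmL] at h2
        exact h2
      refine ⟨Vq, hVsub, hVclosed, hVcard, ?_⟩
      intro hq2
      have hx2 : x ^ 2 ∈ A := hx2of hq2
      have hVinv : ∀ g ∈ Vq, g⁻¹ ∈ Vq := by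
        intro g hg
        have hgx : g ∈ x • (A : Set G) := hVsub hg
        have hl : g⁻¹ * (QuotientGroup.mk g : G ⧸ L).out ∈ L :=
          QuotientGroup.eq.mp (QuotientGroup.out_eq' _).symm
        have hconj := aux_conj_mem_L_of_sq hHA hHnA hAnG hx2 hgx (L.inv_mem hl)
        have heq3 : g * (g⁻¹ * (QuotientGroup.mk g : G ⧸ L).out)⁻¹ * g⁻¹
            = g * ((QuotientGroup.mk g : G ⧸ L).out)⁻¹ := by group
        rw [heq3] at hconj
        have hphi : (QuotientGroup.mk (g⁻¹) : G ⧸ L)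
            = QuotientGroup.mk ((QuotientGroup.mk g : G ⧸ L).out⁻¹) := by
          rw [QuotientGroup.eq]
          simpa using hconj
        show (QuotientGroup.mk (g⁻¹) : G ⧸ L) ∈ (SF : Set (G ⧸ L))
        rw [hphi]
        exact hSFclosed hq2 _ hg
      ext g
      rw [Set.mem_inv]
      constructor
      · intro hginv
        have := hVinv _ hginv
        simpa using this
      · intro hgV
        exact hVinv _ hgV
    choose! V hV1 hV2 hV3 hV4 using hVex
    set W : (G ⧸ A) → Set G := fun q =>
      if q * q = 1 ∨ e q ≤ e q⁻¹ then V q else (V q⁻¹)⁻¹ with hWdef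
    set U : Set G := ⋃ (q : G ⧸ A) (_ : q ≠ 1), W q with hUdef
    have hcoset : ∀ (q : G ⧸ A) (g : G), g ∈ q.out • (A : Set G)
        ↔ QuotientGroup.mk g = q := by
      intro q g
      rw [aux_mem_smulA_iff]
      constructor
      · intro h
        rw [← QuotientGroup.out_eq' q]
        exact (QuotientGroup.eq.mpr h).symm
      · intro h
        exact QuotientGroup.eq.mp ((QuotientGroup.out_eq' q).trans h.symm)
    have hinvne : ∀ q : G ⧸ A, q ≠ 1 → q⁻¹ ≠ 1 := by
      intro q hq h
      exact hq (by rwa [inv_eq_one] at h)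
    have hWsub : ∀ q : G ⧸ A, q ≠ 1 → ∀ g ∈ W q, QuotientGroup.mk g = q := by
      intro q hq g hg
      simp only [hWdef] at hg
      by_cases hcond : q * q = 1 ∨ e q ≤ e q⁻¹
      · rw [if_pos hcond] at hg
        exact (hcoset q g).mp (hV1 q hq hg)
      · rw [if_neg hcond] at hg
        rw [Set.mem_inv] at hg
        have h1 : (QuotientGroup.mk (g⁻¹) : G ⧸ A) = q⁻¹ :=
          (hcoset q⁻¹ g⁻¹).mp (hV1 q⁻¹ (hinvne q hq) hg)
        have h2 : ((QuotientGroup.mk g : G ⧸ A))⁻¹ = q⁻¹ := by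
          rw [← QuotientGroup.mk_inv]
          exact h1
        exact inv_injective h2
    have hWU : ∀ q : G ⧸ A, q ≠ 1 → W q ⊆ U := by
      intro q hq
      intro g hg
      rw [hUdef]
      exact Set.mem_iUnion₂.mpr ⟨q, hq, hg⟩
    have hUA : U ∩ (A : Set G) = ∅ := by
      rw [Set.eq_empty_iff_forall_notMem]
      rintro g ⟨hgU, hgA⟩
      rw [hUdef] at hgU
      simp only [Set.mem_iUnion] at hgU
      obtain ⟨q', hq', hgW⟩ := hgU
      exact hq' ((hWsub q' hq' g hgW) ▸ (QuotientGroup.eq_one_iff g).mpr hgA)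
    have hUcap : ∀ x : G, x ∉ A → U ∩ x • (A : Set G) = W (QuotientGroup.mk x) := by
      intro x hx
      have hq : (QuotientGroup.mk x : G ⧸ A) ≠ 1 := by
        rw [Ne, QuotientGroup.eq_one_iff]; exact hx
      apply Set.Subset.antisymm
      · rintro g ⟨hgU, hgxA⟩
        rw [hUdef] at hgU
        simp only [Set.mem_iUnion] at hgU
        obtain ⟨q', hq', hgW⟩ := hgU
        have h1 : QuotientGroup.mk g = q' := hWsub q' hq' g hgW
        have h2 : (QuotientGroup.mk g : G ⧸ A) = QuotientGroup.mk x := by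
          rw [aux_mem_smulA_iff] at hgxA
          exact (QuotientGroup.eq.mpr hgxA).symm
        have h3 : q' = QuotientGroup.mk x := h1.symm.trans h2
        rw [← h3]
        exact hgW
      · intro g hg
        refine ⟨hWU _ hq hg, ?_⟩
        have h1 : QuotientGroup.mk g = QuotientGroup.mk x := hWsub _ hq g hg
        rw [aux_mem_smulA_iff]
        exact QuotientGroup.eq.mp h1.symm
    have hVWinv : ∀ q : G ⧸ A, q ≠ 1 → ∀ g ∈ W q, g⁻¹ ∈ W q⁻¹ := by
      intro q hq g hg
      by_cases hq2 : q * q = 1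
      · have hqq : q⁻¹ = q := inv_eq_of_mul_eq_one_left hq2
        rw [hqq]
        simp only [hWdef] at hg ⊢
        rw [if_pos (Or.inl hq2)] at hg ⊢
        rw [← hV4 q hq hq2, Set.mem_inv, inv_inv]
        exact hg
      · have hq2' : ¬(q⁻¹ * q⁻¹ = 1) := by
          intro h
          exact hq2 (by simpa using congrArg Inv.inv h)
        have hne : q ≠ q⁻¹ := fun h => hq2 (mul_eq_one_iff_eq_inv.mpr h)
        by_cases hle : e q ≤ e q⁻¹
        · have hlt : ¬(e q⁻¹ ≤ e q) := by
            intro h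
            exact hne (he (le_antisymm hle h))
          simp only [hWdef] at hg ⊢
          rw [if_pos (Or.inr hle)] at hg
          rw [if_neg (by rw [inv_inv]; push_neg; exact ⟨hq2', lt_of_le_of_ne hle (fun h => hne (he h))⟩), inv_inv,
            Set.mem_inv, inv_inv]
          exact hg
        · have hle' : e q⁻¹ ≤ e q := le_of_not_ge hle
          simp only [hWdef] at hg ⊢
          rw [if_neg (by push_neg; exact ⟨hq2, lt_of_le_of_ne hle' (fun h => hne (he h.symm))⟩)] at hg
          rw [if_pos (Or.inr (by rwa [inv_inv]))]
          rw [Set.mem_inv] at hg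
          exact hg
    have hUinv' : ∀ g ∈ U, g⁻¹ ∈ U := by
      intro g hg
      rw [hUdef] at hg ⊢
      simp only [Set.mem_iUnion] at hg ⊢
      obtain ⟨q', hq', hgW⟩ := hg
      exact ⟨q'⁻¹, hinvne q' hq', hVWinv q' hq' g hgW⟩
    have hUinv : U⁻¹ = U := by
      ext g
      rw [Set.mem_inv]
      constructor
      · intro h
        have := hUinv' _ h
        simpa using this
      · intro h
        exact hUinv' _ h
    have hUdc : ∀ g ∈ U, (H : Set G) * {g} * (H : Set G) ⊆ U := by
      intro g hg
      rw [hUdef] at hg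
      simp only [Set.mem_iUnion] at hg
      obtain ⟨q', hq', hgW⟩ := hg
      have hmkg : QuotientGroup.mk g = q' := hWsub q' hq' g hgW
      by_cases hcond : q' * q' = 1 ∨ e q' ≤ e q'⁻¹
      · have hgV : g ∈ V q' := by
          simp only [hWdef] at hgW
          rwa [if_pos hcond] at hgW
        have hgx : g ∈ q'.out • (A : Set G) := (hcoset q' g).mpr hmkg
        have hb : q'.out⁻¹ * g ∈ A := aux_mem_smulA_iff.mp hgx
        have hdcg : (H : Set G) * {g} * (H : Set G)
            = g • ((H ⊔ conjSub H q'.out : Subgroup G) : Set G) := by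
          have h0 := aux_doubleCoset_eq hHA hHnA hAnG hb (x := q'.out)
          rwa [mul_inv_cancel_left] at h0
        rw [hdcg]
        intro y hy
        apply hWU q' hq'
        simp only [hWdef]
        rw [if_pos hcond]
        exact hV2 q' hq' g hgV hy
      · have hgV : g⁻¹ ∈ V q'⁻¹ := by
          simp only [hWdef] at hgW
          rw [if_neg hcond] at hgW
          rwa [Set.mem_inv] at hgW
        have hmkginv : (QuotientGroup.mk (g⁻¹) : G ⧸ A) = q'⁻¹ := by
          rw [QuotientGroup.mk_inv, hmkg]
        have hgx : g⁻¹ ∈ (q'⁻¹).out • (A : Set G) := (hcoset q'⁻¹ g⁻¹).mpr hmkginv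
        have hb : (q'⁻¹).out⁻¹ * g⁻¹ ∈ A := aux_mem_smulA_iff.mp hgx
        have hdcg : (H : Set G) * {g⁻¹} * (H : Set G)
            = g⁻¹ • ((H ⊔ conjSub H (q'⁻¹).out : Subgroup G) : Set G) := by
          have h0 := aux_doubleCoset_eq hHA hHnA hAnG hb (x := (q'⁻¹).out)
          rwa [mul_inv_cancel_left] at h0
        rintro _ ⟨p, ⟨h, hh, c, hc, rfl⟩, h', hh', rfl⟩
        rw [Set.mem_singleton_iff] at hc
        rw [hc]
        apply hWU q' hq'
        simp only [hWdef]
        rw [if_neg hcond, Set.mem_inv]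
        have hmem : (h * g * h')⁻¹ ∈ (H : Set G) * {g⁻¹} * (H : Set G) :=
          ⟨h'⁻¹ * g⁻¹, ⟨h'⁻¹, H.inv_mem hh', g⁻¹, rfl, rfl⟩, h⁻¹, H.inv_mem hh, by group⟩
        rw [hdcg] at hmem
        exact hV2 _ (hinvne q' hq') _ hgV hmem
    have hUHU : (H : Set G) * U * (H : Set G) = U := by
      apply Set.Subset.antisymm
      · rintro _ ⟨p, ⟨h, hh, u, hu, rfl⟩, h', hh', rfl⟩
        exact hUdc u hu ⟨h * u, ⟨h, hh, u, rfl, rfl⟩, h', hh', rfl⟩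
      · intro u hu
        exact ⟨1 * u, ⟨1, H.one_mem, u, hu, rfl⟩, 1, H.one_mem, by simp⟩
    have hcount : ∀ x : G, x ∉ A → (U ∩ x • (A : Set G)).ncard = s * Nat.card H := by
      intro x hx
      have hq : (QuotientGroup.mk x : G ⧸ A) ≠ 1 := by
        rw [Ne, QuotientGroup.eq_one_iff]; exact hx
      rw [hUcap x hx]
      simp only [hWdef]
      by_cases hcond : (QuotientGroup.mk x : G ⧸ A) * QuotientGroup.mk x = 1
          ∨ e (QuotientGroup.mk x) ≤ e (QuotientGroup.mk x)⁻¹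
      · rw [if_pos hcond]
        exact hV3 _ hq
      · rw [if_neg hcond, Set.ncard_inv]
        exact hV3 _ (hinvne _ hq)
    have hHU : (H : Set G) ∩ U = ∅ := by
      rw [Set.eq_empty_iff_forall_notMem]
      rintro g ⟨hgH, hgU⟩
      exact Set.eq_empty_iff_forall_notMem.mp hUA g ⟨hgU, hHA hgH⟩
    have hconn : IsCosetGraphConnectionSet H U := ⟨hUinv, hHU, hUHU⟩
    exact ⟨U, hconn, (aux_regular_iff hHA hconn).mpr ⟨hUA, hcount⟩⟩
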